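/- For every natural number n ≥ 1 there exists a sequential vset-automaton An with 3n+1 states such that every disjunctive functional vset-automaton A′ with ⟦A′⟧(d) = ⟦An⟧(d) for all documents d has at least 2^n states. One may take An to be the chain with states q0,…,qn and, for each 1 ≤ i ≤ n, two intermediate states ri, si, with transitions q_{i−1} →^{xi⊢} ri, ri →^{σ} ri for every σ ∈ Σ, ri →^{⊣xi} qi, and q_{i−1} →^{yi⊢} si, si →^{σ} si for every σ ∈ Σ, si →^{⊣yi} qi, where qn is the unique accepting state and x1,…,xn,y1,…,yn are 2n distinct variables. -/

import Mathlib

namespace Spanners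

open scoped Classical

/-! ### Spans and mappings -/

abbrev Span := ℕ × ℕ

abbrev VMapping := ℕ → Option Span

def emptyMapping : VMapping := fun _ => none

def mapDom (μ : VMapping) : Set ℕ := {x | μ x ≠ none}

/-- Two mappings are compatible if they agree on every common variable. -/
def Compatible (μ1 μ2 : VMapping) : Prop :=
  ∀ x s1 s2, μ1 x = some s1 → μ2 x = some s2 → s1 = s2

def DisjointDom (μ1 μ2 : VMapping) : Prop :=
  ∀ x, μ1 x = none ∨ μ2 x = none

def munion (μ1 μ2 : VMapping) : VMapping := fun x =>
  match μ1 x with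
  | some s => some s
  | none => μ2 x

def minsert (x : ℕ) (s : Span) (μ : VMapping) : VMapping :=
  fun y => if y = x then some s else μ y

/-- Natural join of two sets of mappings. -/
def joinSet (S1 S2 : Set VMapping) : Set VMapping :=
  {μ | ∃ μ1 ∈ S1, ∃ μ2 ∈ S2, Compatible μ1 μ2 ∧ μ = munion μ1 μ2}

/-- Difference of two sets of mappings. -/
def diffSet (S1 S2 : Set VMapping) : Set VMapping :=
  {μ1 | μ1 ∈ S1 ∧ ∀ μ2 ∈ S2, ¬ Compatible μ1 μ2}

/-- Restriction of a mapping to a set of variables. -/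
noncomputable def restrictMap (μ : VMapping) (V : Set ℕ) : VMapping :=
  fun x => if x ∈ V then μ x else none

/-- Projection of a set of mappings to a set of variables. -/
def projSet (V : Set ℕ) (S : Set VMapping) : Set VMapping :=
  {μ' | ∃ μ ∈ S, μ' = restrictMap μ V}

/-! ### Regex formulas -/

inductive RGX (Sig : Type) where
  | empty : RGX Sig
  | eps : RGX Sig
  | letter : Sig → RGX Sig
  | union : RGX Sig → RGX Sig → RGX Sig
  | concat : RGX Sig → RGX Sig → RGX Sig
  | star : RGX Sig → RGX Sig
  | bind : ℕ → RGX Sig → RGX Sig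

variable {Sig : Type}

def RGX.vars : RGX Sig → Finset ℕ
  | .empty => ∅
  | .eps => ∅
  | .letter _ => ∅
  | .union a b => a.vars ∪ b.vars
  | .concat a b => a.vars ∪ b.vars
  | .star a => a.vars
  | .bind x a => insert x a.vars

def RGX.size : RGX Sig → ℕ
  | .empty => 1
  | .eps => 1
  | .letter _ => 1
  | .union a b => a.size + b.size + 1
  | .concat a b => a.size + b.size + 1
  | .star a => a.size + 1
  | .bind _ a => a.size + 1

/-- The schemaless semantics `⟨α⟩(d)`: `RMatch α d i j μ` means `([i,j⟩, μ) ∈ ⟨α⟩(d)`. -/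
inductive RMatch : RGX Sig → List Sig → ℕ → ℕ → VMapping → Prop where
  | eps {d : List Sig} {i : ℕ} (h1 : 1 ≤ i) (h2 : i ≤ d.length + 1) :
      RMatch .eps d i i emptyMapping
  | letter {d : List Sig} {i : ℕ} {σ : Sig} (h1 : 1 ≤ i) (h2 : d[i - 1]? = some σ) :
      RMatch (.letter σ) d i (i + 1) emptyMapping
  | unionL {a b : RGX Sig} {d : List Sig} {i j : ℕ} {μ : VMapping}
      (h : RMatch a d i j μ) : RMatch (.union a b) d i j μ
  | unionR {a b : RGX Sig} {d : List Sig} {i j : ℕ} {μ : VMapping}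
      (h : RMatch b d i j μ) : RMatch (.union a b) d i j μ
  | concat {a b : RGX Sig} {d : List Sig} {i k j : ℕ} {μ1 μ2 : VMapping}
      (h1 : RMatch a d i k μ1) (h2 : RMatch b d k j μ2) (hd : DisjointDom μ1 μ2) :
      RMatch (.concat a b) d i j (munion μ1 μ2)
  | bind {x : ℕ} {a : RGX Sig} {d : List Sig} {i j : ℕ} {μ : VMapping}
      (h : RMatch a d i j μ) (hx : μ x = none) :
      RMatch (.bind x a) d i j (minsert x (i, j) μ)
  | starNil {a : RGX Sig} {d : List Sig} {i : ℕ} (h1 : 1 ≤ i) (h2 : i ≤ d.length + 1) :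
      RMatch (.star a) d i i emptyMapping
  | starCons {a : RGX Sig} {d : List Sig} {i k j : ℕ} {μ1 μ2 : VMapping}
      (h1 : RMatch a d i k μ1) (h2 : RMatch (.star a) d k j μ2) (hd : DisjointDom μ1 μ2) :
      RMatch (.star a) d i j (munion μ1 μ2)

/-- `⟦α⟧(d)`: mappings extracted with the full span. -/
def rgxSem (α : RGX Sig) (d : List Sig) : Set VMapping :=
  {μ | RMatch α d 1 (d.length + 1) μ}

/-- Sequential regex formulas. -/
def RGX.Sequential : RGX Sig → Prop
  | .empty => True
  | .eps => True
  | .letter _ => True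
  | .union a b => a.Sequential ∧ b.Sequential
  | .concat a b => a.Sequential ∧ b.Sequential ∧ Disjoint a.vars b.vars
  | .star a => a.Sequential ∧ a.vars = ∅
  | .bind x a => a.Sequential ∧ x ∉ a.vars

/-- Variable-free words over the alphabet (built from ε, letters and concatenation). -/
inductive RGX.IsWord : RGX Sig → Prop where
  | eps : RGX.IsWord .eps
  | letter (σ : Sig) : RGX.IsWord (.letter σ)
  | concat {a b : RGX Sig} : a.IsWord → b.IsWord → RGX.IsWord (.concat a b)

/-- Functional for a set `V` of variables. -/
inductive FunctionalFor : RGX Sig → Finset ℕ → Prop where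
  | word {α : RGX Sig} (h : α.IsWord) : FunctionalFor α ∅
  | union {a b : RGX Sig} {V : Finset ℕ} (ha : FunctionalFor a V) (hb : FunctionalFor b V) :
      FunctionalFor (.union a b) V
  | concat {a b : RGX Sig} {V : Finset ℕ} (V1 : Finset ℕ) (hsub : V1 ⊆ V)
      (ha : FunctionalFor a V1) (hb : FunctionalFor b (V \ V1)) :
      FunctionalFor (.concat a b) V
  | star {a : RGX Sig} (h : FunctionalFor a ∅) : FunctionalFor (.star a) ∅
  | bind {x : ℕ} {a : RGX Sig} {V : Finset ℕ} (h : FunctionalFor a (V.erase x)) :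
      FunctionalFor (.bind x a) V

def RGX.Functional (α : RGX Sig) : Prop := FunctionalFor α α.vars

/-- Disjunctive functional regex formulas: finite disjunctions of functional regex formulas. -/
inductive DisjFunctional : RGX Sig → Prop where
  | base {γ : RGX Sig} (h : γ.Functional) : DisjFunctional γ
  | union {a b : RGX Sig} (ha : DisjFunctional a) (hb : DisjFunctional b) :
      DisjFunctional (.union a b)

/-- Number of disjuncts of a (disjunctive) regex formula. -/
def countDisjuncts : RGX Sig → ℕ
  | .union a b => countDisjuncts a + countDisjuncts b
  | _ => 1

/-- Disjunction-free regex formulas. -/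
def RGX.DisjFree : RGX Sig → Prop
  | .union _ _ => False
  | .concat a b => a.DisjFree ∧ b.DisjFree
  | .star a => a.DisjFree
  | .bind _ a => a.DisjFree
  | _ => True

/-- `γ` is synchronized for `x`: no subformula `γ1 ∨ γ2` contains `x`. -/
def RGX.SyncFor : RGX Sig → ℕ → Prop
  | .union a b, x => (x ∉ a.vars ∧ x ∉ b.vars) ∧ a.SyncFor x ∧ b.SyncFor x
  | .concat a b, x => a.SyncFor x ∧ b.SyncFor x
  | .star a, x => a.SyncFor x
  | .bind _ a, x => a.SyncFor x
  | _, _ => True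

/-- Concatenation of a list of regex formulas. -/
def concatList : List (RGX Sig) → RGX Sig
  | [] => .eps
  | [α] => α
  | α :: rest => .concat α (concatList rest)

/-- Disjunction of a list of regex formulas. -/
def disjList : List (RGX Sig) → RGX Sig
  | [] => .empty
  | [α] => α
  | α :: rest => .union α (disjList rest)

/-! ### vset-automata -/

inductive VLabel (Sig : Type) where
  | eps : VLabel Sig
  | letter : Sig → VLabel Sig
  | openv : ℕ → VLabel Sig
  | closev : ℕ → VLabel Sig
deriving DecidableEq

structure VA (Sig : Type) [DecidableEq Sig] where
  q0 : ℕ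
  F : Finset ℕ
  δ : Finset (ℕ × VLabel Sig × ℕ)

variable [DecidableEq Sig]

/-- The states of a VA: the initial state and all states mentioned in `F` or in transitions. -/
def statesOf (A : VA Sig) : Finset ℕ :=
  insert A.q0 (A.F ∪ A.δ.image (fun t => t.1) ∪ A.δ.image (fun t => t.2.2))

def labelVars : VLabel Sig → Finset ℕ
  | .openv x => {x}
  | .closev x => {x}
  | _ => ∅

/-- `Vars(A)`: the variables mentioned in the transitions of `A`. -/
def varsOf (A : VA Sig) : Finset ℕ := A.δ.biUnion (fun t => labelVars t.2.1)

/-- Total size of a VA: number of states plus number of transitions. -/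
def vaSize (A : VA Sig) : ℕ := (statesOf A).card + A.δ.card

/-- `A.PathFrom p ls q`: a path (run segment) from `p` to `q` with label sequence `ls`. -/
inductive VA.PathFrom (A : VA Sig) : ℕ → List (VLabel Sig) → ℕ → Prop where
  | nil (q : ℕ) : VA.PathFrom A q [] q
  | cons {p q r : ℕ} {l : VLabel Sig} {ls : List (VLabel Sig)}
      (h : (p, l, q) ∈ A.δ) (htail : VA.PathFrom A q ls r) : VA.PathFrom A p (l :: ls) r

/-- The word (document) read by a sequence of labels. -/
def readWord : List (VLabel Sig) → List Sig :=
  List.filterMap fun l => match l with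
    | VLabel.letter σ => some σ
    | _ => none

def isLetterL : VLabel Sig → Bool
  | .letter _ => true
  | _ => false

/-- The current position in the document just before executing the `k`-th label. -/
def posAt (ls : List (VLabel Sig)) (k : ℕ) : ℕ := 1 + (ls.take k).countP isLetterL

/-- Validity of a run, given by its label sequence. -/
def ValidLabels (ls : List (VLabel Sig)) : Prop :=
  ∀ x : ℕ,
    ls.count (VLabel.openv x) ≤ 1 ∧
    ls.count (VLabel.closev x) ≤ 1 ∧
    ((VLabel.openv x) ∈ ls ↔ (VLabel.closev x) ∈ ls) ∧
    ∀ i j : ℕ, ls[i]? = some (VLabel.openv x) → ls[j]? = some (VLabel.closev x) →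
      posAt ls i ≤ posAt ls j

/-- The mapping `μ_ρ` extracted from a (valid accepting) run with label sequence `ls`. -/
def runMapping (ls : List (VLabel Sig)) : VMapping := fun x =>
  if (VLabel.openv x) ∈ ls then
    some (posAt ls (ls.idxOf (VLabel.openv x)), posAt ls (ls.idxOf (VLabel.closev x)))
  else none

/-- `ls` is the label sequence of an accepting run of `A`. -/
def AcceptsWith (A : VA Sig) (ls : List (VLabel Sig)) : Prop :=
  ∃ qf, VA.PathFrom A A.q0 ls qf ∧ qf ∈ A.F

/-- `⟦A⟧(d)`. -/
def vaSem (A : VA Sig) (d : List Sig) : Set VMapping :=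
  {μ | ∃ ls, AcceptsWith A ls ∧ readWord ls = d ∧ ValidLabels ls ∧ μ = runMapping ls}

/-- A VA is sequential if all of its accepting runs are valid. -/
def VA.Sequential (A : VA Sig) : Prop := ∀ ls, AcceptsWith A ls → ValidLabels ls

/-- A run from the initial state to `q` that is a prefix of an accepting run. -/
def PrefixRun (A : VA Sig) (ls : List (VLabel Sig)) (q : ℕ) : Prop :=
  VA.PathFrom A A.q0 ls q ∧ ∃ ls' qf, VA.PathFrom A q ls' qf ∧ qf ∈ A.F

/-- `A` is semi-functional for the variable `x`: no state has extended configuration `d`. -/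
def SemiFunctionalFor (A : VA Sig) (x : ℕ) : Prop :=
  ¬ ∃ q ls1 ls2, PrefixRun A ls1 q ∧ PrefixRun A ls2 q ∧
      (VLabel.closev x) ∈ ls1 ∧ (VLabel.openv x) ∉ ls2

def SemiFunctionalForSet (A : VA Sig) (X : Finset ℕ) : Prop :=
  ∀ x ∈ X, SemiFunctionalFor A x

/-- Functional VA: sequential, and every accepting run opens and closes every variable. -/
def FunctionalVA (A : VA Sig) : Prop :=
  A.Sequential ∧ ∀ ls, AcceptsWith A ls → ∀ x ∈ varsOf A,
    (VLabel.openv x) ∈ ls ∧ (VLabel.closev x) ∈ ls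

/-- `l` has a unique target state in `A`. -/
def UniqueTarget (A : VA Sig) (l : VLabel Sig) : Prop :=
  ∃ qt : ℕ, ∀ p q : ℕ, (p, l, q) ∈ A.δ → q = qt

/-- `A` is synchronized for the variable `x`. -/
def SyncForVA (A : VA Sig) (x : ℕ) : Prop :=
  UniqueTarget A (VLabel.openv x) ∧ UniqueTarget A (VLabel.closev x) ∧
    ((∀ ls, AcceptsWith A ls → (VLabel.openv x) ∈ ls ∧ (VLabel.closev x) ∈ ls) ∨
     (∀ ls, AcceptsWith A ls → (VLabel.openv x) ∉ ls ∧ (VLabel.closev x) ∉ ls))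

/-- `A` is the disjunctive functional VA with functional components `parts`. -/
def DisjFunctionalVAWith (A : VA Sig) (parts : List (VA Sig)) : Prop :=
  (∀ B ∈ parts, FunctionalVA B) ∧
  (parts.Pairwise fun B C => Disjoint (statesOf B) (statesOf C)) ∧
  (∀ B ∈ parts, A.q0 ∉ statesOf B) ∧
  A.F = parts.foldr (fun B s => B.F ∪ s) (∅ : Finset ℕ) ∧
  A.δ = (parts.map (fun B => (A.q0, (VLabel.eps : VLabel Sig), B.q0))).toFinset
        ∪ parts.foldr (fun B s => B.δ ∪ s) (∅ : Finset (ℕ × VLabel Sig × ℕ))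

def DisjFunctionalVA (A : VA Sig) : Prop := ∃ parts, DisjFunctionalVAWith A parts

/-! ### 3CNF formulas -/

/-- A 3CNF clause over `n` Boolean variables: a triple of literals; `(i, true)` is `xᵢ`,
`(i, false)` is `¬xᵢ`. -/
def Clause3 (n : ℕ) : Type := (Fin n × Bool) × (Fin n × Bool) × (Fin n × Bool)

def litsOf {n : ℕ} (c : Clause3 n) : List (Fin n × Bool) := [c.1, c.2.1, c.2.2]

def clauseSat {n : ℕ} (τ : Fin n → Bool) (c : Clause3 n) : Prop :=
  ∃ l ∈ litsOf c, τ l.1 = l.2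

def Sat3 {n m : ℕ} (φ : Fin m → Clause3 n) : Prop :=
  ∃ τ : Fin n → Bool, ∀ j, clauseSat τ (φ j)

end Spanners

namespace Spanners

variable {Sig : Type} [Fintype Sig] [DecidableEq Sig]

/-- The chain automaton `An`: states `q_i = 3i`, `r_{i+1} = 3i+1`, `s_{i+1} = 3i+2`,
variables `x_{i+1} = 2i`, `y_{i+1} = 2i+1`; `q_n = 3n` is the unique accepting state. -/
def chainVA (Sig : Type) [Fintype Sig] [DecidableEq Sig] (n : ℕ) : VA Sig where
  q0 := 0
  F := {3 * n}
  δ := (Finset.range n).biUnion fun i =>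
    (({(3 * i, VLabel.openv (2 * i), 3 * i + 1),
       (3 * i, VLabel.openv (2 * i + 1), 3 * i + 2),
       (3 * i + 1, VLabel.closev (2 * i), 3 * (i + 1)),
       (3 * i + 2, VLabel.closev (2 * i + 1), 3 * (i + 1))} : Finset (ℕ × VLabel Sig × ℕ))
     ∪ (Finset.univ : Finset Sig).image (fun σ => (3 * i + 1, VLabel.letter σ, 3 * i + 1))
     ∪ (Finset.univ : Finset Sig).image (fun σ => (3 * i + 2, VLabel.letter σ, 3 * i + 2)))

set_option linter.unusedSectionVars false
section Aux
variable {Sig : Type} [Fintype Sig] [DecidableEq Sig]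

lemma chain_q0 (n : ℕ) : (chainVA Sig n).q0 = 0 := rfl
lemma chain_F (n : ℕ) : (chainVA Sig n).F = {3*n} := rfl

lemma mem_chain_delta {n p q : ℕ} {l : VLabel Sig} :
    (p, l, q) ∈ (chainVA Sig n).δ ↔ ∃ i < n,
      (p = 3*i ∧ l = .openv (2*i) ∧ q = 3*i+1) ∨
      (p = 3*i ∧ l = .openv (2*i+1) ∧ q = 3*i+2) ∨
      (p = 3*i+1 ∧ l = .closev (2*i) ∧ q = 3*i+3) ∨
      (p = 3*i+2 ∧ l = .closev (2*i+1) ∧ q = 3*i+3) ∨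
      (∃ σ : Sig, p = 3*i+1 ∧ l = .letter σ ∧ q = 3*i+1) ∨
      (∃ σ : Sig, p = 3*i+2 ∧ l = .letter σ ∧ q = 3*i+2) := by
  simp only [chainVA, Finset.mem_biUnion, Finset.mem_range, Finset.mem_union,
    Finset.mem_insert, Finset.mem_singleton, Finset.mem_image, Finset.mem_univ, true_and,
    Prod.mk.injEq]
  constructor
  · rintro ⟨i, hi, (((h|h|h|h)|⟨σ,h⟩)|⟨σ,h⟩)⟩ <;>
      exact ⟨i, hi, by obtain ⟨h1,h2,h3⟩ := h; subst h1; subst h2; subst h3; simp +arith [mul_add]⟩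
  · rintro ⟨i, hi, (h|h|h|h|⟨σ,h⟩|⟨σ,h⟩)⟩ <;>
    · refine ⟨i, hi, ?_⟩
      obtain ⟨h1,h2,h3⟩ := h; subst h1; subst h2; subst h3
      simp +arith [mul_add]

lemma statesOf_chain (n : ℕ) : statesOf (chainVA Sig n) = Finset.range (3*n+1) := by
  ext q
  simp only [statesOf, chain_q0, chain_F, Finset.mem_insert, Finset.mem_union,
    Finset.mem_image, Finset.mem_range, Finset.mem_singleton]
  constructor
  · intro h
    rcases h with rfl | (h | h) | h
    · omega
    · omega
    · obtain ⟨⟨p, l, r⟩, ht, hq⟩ := h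
      rw [mem_chain_delta] at ht
      obtain ⟨i, hi, (h|h|h|h|⟨σ,h⟩|⟨σ,h⟩)⟩ := ht <;> simp_all <;> omega
    · obtain ⟨⟨p, l, r⟩, ht, hq⟩ := h
      rw [mem_chain_delta] at ht
      obtain ⟨i, hi, (h|h|h|h|⟨σ,h⟩|⟨σ,h⟩)⟩ := ht <;> simp_all <;> omega
  · intro hq
    rcases Nat.eq_zero_or_pos q with rfl | hq0
    · exact Or.inl rfl
    refine Or.inr (Or.inr ?_)
    have : ∃ i < n, q = 3*i+1 ∨ q = 3*i+2 ∨ q = 3*i+3 := by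
      refine ⟨(q-1)/3, by omega, by omega⟩
    obtain ⟨i, hi, hq3⟩ := this
    rcases hq3 with h | h | h
    · exact ⟨(3*i, VLabel.openv (2*i), 3*i+1), mem_chain_delta.2 ⟨i, hi, by tauto⟩, h.symm⟩
    · exact ⟨(3*i, VLabel.openv (2*i+1), 3*i+2), mem_chain_delta.2 ⟨i, hi, by tauto⟩, h.symm⟩
    · exact ⟨(3*i+1, VLabel.closev (2*i), 3*i+3), mem_chain_delta.2 ⟨i, hi, by tauto⟩, h.symm⟩

end Aux

section Aux2
variable {Sig : Type} [Fintype Sig] [DecidableEq Sig]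

lemma mem_open1 {n k : ℕ} (hk : k < n) :
    ((3*k, VLabel.openv (2*k), 3*k+1) : ℕ × VLabel Sig × ℕ) ∈ (chainVA Sig n).δ :=
  mem_chain_delta.2 ⟨k, hk, Or.inl ⟨rfl, rfl, rfl⟩⟩
lemma mem_open2 {n k : ℕ} (hk : k < n) :
    ((3*k, VLabel.openv (2*k+1), 3*k+2) : ℕ × VLabel Sig × ℕ) ∈ (chainVA Sig n).δ :=
  mem_chain_delta.2 ⟨k, hk, Or.inr (Or.inl ⟨rfl, rfl, rfl⟩)⟩
lemma mem_close1 {n k : ℕ} (hk : k < n) :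
    ((3*k+1, VLabel.closev (2*k), 3*k+3) : ℕ × VLabel Sig × ℕ) ∈ (chainVA Sig n).δ :=
  mem_chain_delta.2 ⟨k, hk, Or.inr (Or.inr (Or.inl ⟨rfl, rfl, rfl⟩))⟩
lemma mem_close2 {n k : ℕ} (hk : k < n) :
    ((3*k+2, VLabel.closev (2*k+1), 3*k+3) : ℕ × VLabel Sig × ℕ) ∈ (chainVA Sig n).δ :=
  mem_chain_delta.2 ⟨k, hk, Or.inr (Or.inr (Or.inr (Or.inl ⟨rfl, rfl, rfl⟩)))⟩
lemma mem_letter1 {n k : ℕ} (hk : k < n) (σ : Sig) :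
    ((3*k+1, VLabel.letter σ, 3*k+1) : ℕ × VLabel Sig × ℕ) ∈ (chainVA Sig n).δ :=
  mem_chain_delta.2 ⟨k, hk, Or.inr (Or.inr (Or.inr (Or.inr (Or.inl ⟨σ, rfl, rfl, rfl⟩))))⟩
lemma mem_letter2 {n k : ℕ} (hk : k < n) (σ : Sig) :
    ((3*k+2, VLabel.letter σ, 3*k+2) : ℕ × VLabel Sig × ℕ) ∈ (chainVA Sig n).δ :=
  mem_chain_delta.2 ⟨k, hk, Or.inr (Or.inr (Or.inr (Or.inr (Or.inr ⟨σ, rfl, rfl, rfl⟩))))⟩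

lemma path_nil_inv {A : VA Sig} {p r : ℕ} (h : VA.PathFrom A p [] r) : p = r := by
  cases h; rfl

lemma path_cons_inv {A : VA Sig} {p r : ℕ} {l : VLabel Sig} {ls : List (VLabel Sig)}
    (h : VA.PathFrom A p (l :: ls) r) : ∃ q, (p, l, q) ∈ A.δ ∧ VA.PathFrom A q ls r := by
  cases h with | cons h ht => exact ⟨_, h, ht⟩

lemma path_append {A : VA Sig} {p q r : ℕ} {l1 l2 : List (VLabel Sig)}
    (h1 : VA.PathFrom A p l1 q) (h2 : VA.PathFrom A q l2 r) :
    VA.PathFrom A p (l1 ++ l2) r := by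
  induction h1 with
  | nil => exact h2
  | cons h htail ih => exact .cons h (ih h2)

/-- Canonical structure of runs of the chain automaton from state `3k` to `3n`. -/
inductive ChainRun (Sig : Type) (n : ℕ) : ℕ → List (VLabel Sig) → Prop
  | done : ChainRun Sig n n []
  | step (k v : ℕ) (w : List Sig) (rest : List (VLabel Sig)) (hk : k < n)
      (hv : v = 2*k ∨ v = 2*k+1) (h : ChainRun Sig n (k+1) rest) :
      ChainRun Sig n k (VLabel.openv v :: (w.map VLabel.letter ++ VLabel.closev v :: rest))

lemma letterLoop1 {n k : ℕ} (hk : k < n) (w : List Sig) :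
    VA.PathFrom (chainVA Sig n) (3*k+1) (w.map VLabel.letter) (3*k+1) := by
  induction w with
  | nil => exact .nil _
  | cons σ w ih => exact .cons (mem_letter1 hk σ) ih

lemma letterLoop2 {n k : ℕ} (hk : k < n) (w : List Sig) :
    VA.PathFrom (chainVA Sig n) (3*k+2) (w.map VLabel.letter) (3*k+2) := by
  induction w with
  | nil => exact .nil _
  | cons σ w ih => exact .cons (mem_letter2 hk σ) ih

lemma chainRun_path {n k : ℕ} {ls : List (VLabel Sig)} (h : ChainRun Sig n k ls) :
    VA.PathFrom (chainVA Sig n) (3*k) ls (3*n) := by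
  induction h with
  | done => exact .nil _
  | step k v w rest hk hv h ih =>
      have h3 : 3*(k+1) = 3*k+3 := by ring
      rw [h3] at ih
      rcases hv with rfl | rfl
      · exact .cons (mem_open1 hk) (path_append (letterLoop1 hk w) (.cons (mem_close1 hk) ih))
      · exact .cons (mem_open2 hk) (path_append (letterLoop2 hk w) (.cons (mem_close2 hk) ih))

lemma chain_path_structure {n : ℕ} : ∀ ls : List (VLabel Sig),
    (∀ k, k ≤ n → VA.PathFrom (chainVA Sig n) (3*k) ls (3*n) → ChainRun Sig n k ls) ∧
    (∀ k b, k < n → (b = 1 ∨ b = 2) → VA.PathFrom (chainVA Sig n) (3*k+b) ls (3*n) →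
      ∃ (w : List Sig) (rest : List (VLabel Sig)),
        ls = w.map VLabel.letter ++ VLabel.closev (2*k + b - 1) :: rest ∧
        ChainRun Sig n (k+1) rest) := by
  intro ls
  induction ls with
  | nil =>
      constructor
      · intro k hk h
        have := path_nil_inv h
        have : k = n := by omega
        subst this; exact .done
      · intro k b hk hb h
        have := path_nil_inv h
        omega
  | cons l tl ih =>
      constructor
      · intro k hk h
        obtain ⟨q, hδ, htail⟩ := path_cons_inv h
        rw [mem_chain_delta] at hδ
        obtain ⟨i, hi, hc⟩ := hδ
        rcases hc with ⟨h1,h2,h3⟩|⟨h1,h2,h3⟩|⟨h1,h2,h3⟩|⟨h1,h2,h3⟩|⟨σ,h1,h2,h3⟩|⟨σ,h1,h2,h3⟩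
        · have hik : i = k := by omega
          subst hik; subst h2; subst h3
          obtain ⟨w, rest, hw, hcr⟩ := ih.2 i 1 hi (Or.inl rfl) htail
          rw [hw]
          have he : 2*i+1-1 = 2*i := rfl
          rw [he]
          exact .step i (2*i) w rest hi (Or.inl rfl) hcr
        · have hik : i = k := by omega
          subst hik; subst h2; subst h3
          obtain ⟨w, rest, hw, hcr⟩ := ih.2 i 2 hi (Or.inr rfl) htail
          rw [hw]
          have he : 2*i+2-1 = 2*i+1 := rfl
          rw [he]
          exact .step i (2*i+1) w rest hi (Or.inr rfl) hcr
        · omega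
        · omega
        · omega
        · omega
      · intro k b hk hb h
        obtain ⟨q, hδ, htail⟩ := path_cons_inv h
        rw [mem_chain_delta] at hδ
        obtain ⟨i, hi, hc⟩ := hδ
        rcases hc with ⟨h1,h2,h3⟩|⟨h1,h2,h3⟩|⟨h1,h2,h3⟩|⟨h1,h2,h3⟩|⟨σ,h1,h2,h3⟩|⟨σ,h1,h2,h3⟩
        · omega
        · omega
        · -- close from 3i+1 : b = 1, i = k
          have hb1 : b = 1 := by omega
          have hik : i = k := by omega
          subst hb1; subst hik; subst h2; subst h3
          have hrest : ChainRun Sig n (i+1) tl := by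
            refine ih.1 (i+1) (by omega) ?_
            have h3' : 3*(i+1) = 3*i+3 := by ring
            rw [h3']; exact htail
          exact ⟨[], tl, by simp, hrest⟩
        · have hb2 : b = 2 := by omega
          have hik : i = k := by omega
          subst hb2; subst hik; subst h2; subst h3
          have hrest : ChainRun Sig n (i+1) tl := by
            refine ih.1 (i+1) (by omega) ?_
            have h3' : 3*(i+1) = 3*i+3 := by ring
            rw [h3']; exact htail
          exact ⟨[], tl, by simp, hrest⟩
        · -- letter at 3i+1 : b = 1, i = k
          have hb1 : b = 1 := by omega
          have hik : i = k := by omega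
          subst hb1; subst hik; subst h2; subst h3
          obtain ⟨w, rest, hw, hcr⟩ := ih.2 i 1 hi (Or.inl rfl) htail
          exact ⟨σ :: w, rest, by rw [hw]; simp, hcr⟩
        · have hb2 : b = 2 := by omega
          have hik : i = k := by omega
          subst hb2; subst hik; subst h2; subst h3
          obtain ⟨w, rest, hw, hcr⟩ := ih.2 i 2 hi (Or.inr rfl) htail
          exact ⟨σ :: w, rest, by rw [hw]; simp, hcr⟩

end Aux2

section Aux3
variable {Sig : Type} [Fintype Sig] [DecidableEq Sig]

lemma chainRun_open_bound {n k x : ℕ} {ls : List (VLabel Sig)} (h : ChainRun Sig n k ls)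
    (hx : VLabel.openv x ∈ ls) : 2*k ≤ x ∧ x < 2*n := by
  induction h with
  | done => simp at hx
  | step k v w rest hk hv h ih =>
      simp only [List.mem_cons, List.mem_append, List.mem_map] at hx
      rcases hx with h1 | ⟨σ, _, h2⟩ | h3
      · injection h1 with h1; omega
      · exact absurd h2 (by simp)
      · rcases h3 with h3 | h3
        · exact absurd h3 (by simp)
        · have := ih h3; omega

lemma chainRun_close_bound {n k x : ℕ} {ls : List (VLabel Sig)} (h : ChainRun Sig n k ls)
    (hx : VLabel.closev x ∈ ls) : 2*k ≤ x ∧ x < 2*n := by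
  induction h with
  | done => simp at hx
  | step k v w rest hk hv h ih =>
      simp only [List.mem_cons, List.mem_append, List.mem_map] at hx
      rcases hx with h1 | ⟨σ, _, h2⟩ | h3
      · exact absurd h1 (by simp)
      · exact absurd h2 (by simp)
      · rcases h3 with h3 | h3
        · injection h3 with h3; omega
        · have := ih h3; omega

lemma chainRun_count_open {n k x : ℕ} {ls : List (VLabel Sig)} (h : ChainRun Sig n k ls) :
    ls.count (VLabel.openv x) ≤ 1 := by
  induction h with
  | done => simp
  | step k v w rest hk hv h ih =>
      have hmid : (w.map VLabel.letter).count (VLabel.openv x) = 0 := by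
        rw [List.count_eq_zero]; simp
      rw [List.count_cons, List.count_append, hmid, List.count_cons]
      rcases eq_or_ne x v with rfl | hne
      · have hrest : rest.count (VLabel.openv x) = 0 := by
          rw [List.count_eq_zero]
          intro hmem
          have := (chainRun_open_bound h hmem).1
          omega
        simp [hrest]
      · have h1 : ((VLabel.openv v : VLabel Sig) == VLabel.openv x) = false := by
          simp [hne.symm]
        have h2 : ((VLabel.closev v : VLabel Sig) == VLabel.openv x) = false := by simp
        rw [h1, h2]
        simpa using ih

lemma chainRun_count_close {n k x : ℕ} {ls : List (VLabel Sig)} (h : ChainRun Sig n k ls) :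
    ls.count (VLabel.closev x) ≤ 1 := by
  induction h with
  | done => simp
  | step k v w rest hk hv h ih =>
      have hmid : (w.map VLabel.letter).count (VLabel.closev x) = 0 := by
        rw [List.count_eq_zero]; simp
      rw [List.count_cons, List.count_append, hmid, List.count_cons]
      rcases eq_or_ne x v with rfl | hne
      · have hrest : rest.count (VLabel.closev x) = 0 := by
          rw [List.count_eq_zero]
          intro hmem
          have := (chainRun_close_bound h hmem).1
          omega
        have h1 : ((VLabel.openv x : VLabel Sig) == VLabel.closev x) = false := by simp
        simp [hrest, h1]
      · have h1 : ((VLabel.openv v : VLabel Sig) == VLabel.closev x) = false := by simp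
        have h2 : ((VLabel.closev v : VLabel Sig) == VLabel.closev x) = false := by
          simp [hne.symm]
        rw [h1, h2]
        simpa using ih

lemma chainRun_mem_iff {n k x : ℕ} {ls : List (VLabel Sig)} (h : ChainRun Sig n k ls) :
    (VLabel.openv x ∈ ls ↔ VLabel.closev x ∈ ls) := by
  induction h with
  | done => simp
  | step k v w rest hk hv h ih =>
      simp only [List.mem_cons, List.mem_append, List.mem_map]
      constructor
      · rintro (h1 | ⟨σ, _, h2⟩ | h3 | h3)
        · injection h1 with h1; subst h1; right; right; left; rfl
        · exact absurd h2 (by simp)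
        · exact absurd h3 (by simp)
        · right; right; right; exact ih.1 h3
      · rintro (h1 | ⟨σ, _, h2⟩ | h3 | h3)
        · exact absurd h1 (by simp)
        · exact absurd h2 (by simp)
        · injection h3 with h3; subst h3; left; rfl
        · right; right; right; exact ih.2 h3

lemma mem_of_getElem?' {α : Type*} {l : List α} {n : ℕ} {a : α} (h : l[n]? = some a) :
    a ∈ l := by
  obtain ⟨hn, he⟩ := List.getElem?_eq_some_iff.1 h
  exact he ▸ l.getElem_mem hn

lemma posAt_ge_one {ls : List (VLabel Sig)} {j : ℕ} : 1 ≤ posAt ls j := Nat.le_add_right 1 _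

lemma posAt_zero {ls : List (VLabel Sig)} : posAt ls 0 = 1 := by simp [posAt]

lemma shape_getElem {a b c : VLabel Sig} {w : List Sig} {rest : List (VLabel Sig)} {i : ℕ}
    (hc : isLetterL c = false)
    (h : (a :: (w.map VLabel.letter ++ b :: rest))[i]? = some c) :
    (i = 0 ∧ c = a) ∨ (i = w.length + 1 ∧ c = b) ∨
      (w.length + 2 ≤ i ∧ rest[i - (w.length + 2)]? = some c) := by
  match i with
  | 0 =>
      simp only [List.getElem?_cons_zero, Option.some.injEq] at h
      exact Or.inl ⟨rfl, h.symm⟩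
  | Nat.succ m =>
      rw [List.getElem?_cons_succ] at h
      rcases lt_trichotomy m w.length with hm | hm | hm
      · rw [List.getElem?_append_left (by simpa using hm)] at h
        have : c ∈ w.map VLabel.letter := mem_of_getElem?' h
        simp only [List.mem_map] at this
        obtain ⟨σ, _, rfl⟩ := this
        simp [isLetterL] at hc
      · subst hm
        rw [List.getElem?_append_right (by simp)] at h
        simp only [List.length_map, Nat.sub_self, List.getElem?_cons_zero,
          Option.some.injEq] at h
        exact Or.inr (Or.inl ⟨rfl, h.symm⟩)
      · rw [List.getElem?_append_right (by simp only [List.length_map]; omega)] at h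
        have hgt : m - w.length = (m - w.length - 1) + 1 := by omega
        rw [List.length_map, hgt, List.getElem?_cons_succ] at h
        refine Or.inr (Or.inr ⟨by omega, ?_⟩)
        have : m + 1 - (w.length + 2) = m - w.length - 1 := by omega
        rw [this]; exact h

lemma posAt_region3 {a b : VLabel Sig} (ha : isLetterL a = false) (hb : isLetterL b = false)
    (w : List Sig) (rest : List (VLabel Sig)) (m : ℕ) :
    posAt (a :: (w.map VLabel.letter ++ b :: rest)) (w.length + 2 + m)
      = w.length + posAt rest m := by
  have h1 : w.length + 2 + m = (w.length + 1 + m) + 1 := by omega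
  have h2 : List.take (w.length + 1 + m) (w.map VLabel.letter) = w.map VLabel.letter :=
    List.take_of_length_le (by simp only [List.length_map]; omega)
  have h3 : w.length + 1 + m - (w.map VLabel.letter).length = m + 1 := by
    simp only [List.length_map]; omega
  have key : List.take (w.length + 2 + m) (a :: (w.map VLabel.letter ++ b :: rest))
      = a :: (w.map VLabel.letter ++ b :: List.take m rest) := by
    rw [h1, List.take_succ_cons, List.take_append, h2, h3, List.take_succ_cons]
  have h4 : List.countP isLetterL (w.map VLabel.letter) = w.length := by
    rw [List.countP_map]
    have : (isLetterL ∘ VLabel.letter : Sig → Bool) = fun _ => true := by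
      funext σ; rfl
    rw [this]; simp
  rw [posAt, key, List.countP_cons, ha, List.countP_append, List.countP_cons, hb, h4, posAt]
  simp only [Bool.false_eq_true, if_false]
  omega

lemma chainRun_posAt {n k : ℕ} {ls : List (VLabel Sig)} (h : ChainRun Sig n k ls) :
    ∀ x i j, ls[i]? = some (VLabel.openv x) → ls[j]? = some (VLabel.closev x) →
      posAt ls i ≤ posAt ls j := by
  induction h with
  | done => intro x i j hi hj; simp at hi
  | step k v w rest hk hv h ih =>
      intro x i j hi hj
      rcases shape_getElem (by exact rfl) hi with ⟨rfl, _⟩ | ⟨_, hbad⟩ | ⟨hle, hi'⟩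
      · rw [posAt_zero]; exact posAt_ge_one
      · exact absurd hbad (by simp)
      · -- open of x inside rest
        have hxrest : VLabel.openv x ∈ rest := mem_of_getElem?' hi'
        have hxv : x ≠ v := by
          have := (chainRun_open_bound h hxrest).1
          omega
        rcases shape_getElem (by exact rfl) hj with ⟨_, hbad⟩ | ⟨_, hbad⟩ | ⟨hle', hj'⟩
        · exact absurd hbad (by simp)
        · have : x = v := by injection hbad
          exact absurd this hxv
        · have hi2 : i = w.length + 2 + (i - (w.length + 2)) := by omega
          have hj2 : j = w.length + 2 + (j - (w.length + 2)) := by omega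
          rw [hi2, hj2, posAt_region3 (by exact rfl) (by exact rfl), posAt_region3 (by exact rfl) (by exact rfl)]
          have := ih x _ _ hi' hj'
          omega

lemma chainRun_valid {n : ℕ} {ls : List (VLabel Sig)} (h : ChainRun Sig n 0 ls) :
    ValidLabels ls :=
  fun x => ⟨chainRun_count_open h, chainRun_count_close h, chainRun_mem_iff h,
    chainRun_posAt h x⟩

lemma chain_sequential {n : ℕ} : (chainVA Sig n).Sequential := by
  intro ls hacc
  obtain ⟨qf, hpath, hqf⟩ := hacc
  rw [chain_F, Finset.mem_singleton] at hqf
  subst hqf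
  have h0 : (chainVA Sig n).q0 = 3 * 0 := rfl
  rw [h0] at hpath
  exact chainRun_valid ((chain_path_structure ls).1 0 (Nat.zero_le n) hpath)

end Aux3

section Aux4
variable {Sig : Type} [Fintype Sig] [DecidableEq Sig]

def varC (c : ℕ → Bool) (i : ℕ) : ℕ := 2*i + (if c i then 1 else 0)

def lsC (Sig : Type) (c : ℕ → Bool) : ℕ → ℕ → List (VLabel Sig)
  | _, 0 => []
  | k, m+1 => VLabel.openv (varC c k) :: VLabel.closev (varC c k) :: lsC Sig c (k+1) m

lemma chainRun_lsC {n : ℕ} (c : ℕ → Bool) : ∀ m k, k + m = n → ChainRun Sig n k (lsC Sig c k m) := by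
  intro m
  induction m with
  | zero => intro k hk; have : k = n := by omega
            subst this; exact .done
  | succ m ih =>
      intro k hk
      have hv : varC c k = 2*k ∨ varC c k = 2*k+1 := by
        unfold varC; cases c k <;> simp
      exact ChainRun.step k (varC c k) [] (lsC Sig c (k+1) m) (by omega) hv (ih (k+1) (by omega))

lemma mem_open_lsC {c : ℕ → Bool} {x : ℕ} : ∀ {m k : ℕ},
    ((VLabel.openv x : VLabel Sig) ∈ lsC Sig c k m ↔ ∃ i, k ≤ i ∧ i < k + m ∧ x = varC c i) := by
  intro m
  induction m with
  | zero => intro k; simp [lsC]; omega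
  | succ m ih =>
      intro k
      simp only [lsC, List.mem_cons]
      constructor
      · rintro (h | h | h)
        · injection h with h; exact ⟨k, le_refl k, by omega, h⟩
        · exact absurd h (by simp)
        · obtain ⟨i, h1, h2, h3⟩ := ih.1 h
          exact ⟨i, by omega, by omega, h3⟩
      · rintro ⟨i, h1, h2, h3⟩
        rcases eq_or_lt_of_le h1 with rfl | hlt
        · exact Or.inl (by rw [h3])
        · exact Or.inr (Or.inr (ih.2 ⟨i, by omega, by omega, h3⟩))

lemma no_letter_lsC {c : ℕ → Bool} : ∀ {m k : ℕ} (l : VLabel Sig),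
    l ∈ lsC Sig c k m → isLetterL l = false := by
  intro m
  induction m with
  | zero => intro k l h; simp [lsC] at h
  | succ m ih =>
      intro k l h
      simp only [lsC, List.mem_cons] at h
      rcases h with rfl | rfl | h
      · rfl
      · rfl
      · exact ih l h

lemma readWord_lsC {c : ℕ → Bool} : ∀ {m k : ℕ}, readWord (lsC Sig c k m) = ([] : List Sig) := by
  intro m
  induction m with
  | zero => intro k; rfl
  | succ m ih => intro k; simp only [lsC, readWord, List.filterMap_cons]; exact ih

lemma posAt_lsC {c : ℕ → Bool} {m k j : ℕ} : posAt (lsC Sig c k m) j = 1 := by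
  rw [posAt]
  have : List.countP isLetterL (List.take j (lsC Sig c k m)) = 0 := by
    rw [List.countP_eq_zero]
    intro l hl
    have := no_letter_lsC (Sig := Sig) l (List.take_subset _ _ hl)
    simp [this]
  omega

def muC (c : ℕ → Bool) (n : ℕ) : VMapping := fun x =>
  if ∃ i, i < n ∧ x = varC c i then some (1,1) else none

lemma runMapping_lsC {c : ℕ → Bool} {n : ℕ} :
    runMapping (lsC Sig c 0 n) = muC c n := by
  funext x
  simp only [runMapping, muC]
  by_cases h : (VLabel.openv x : VLabel Sig) ∈ lsC Sig c 0 n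
  · rw [if_pos h, if_pos]
    · rw [posAt_lsC, posAt_lsC]
    · obtain ⟨i, _, h2, h3⟩ := mem_open_lsC.1 h
      exact ⟨i, by omega, h3⟩
  · rw [if_neg h, if_neg]
    intro ⟨i, h1, h2⟩
    exact h (mem_open_lsC.2 ⟨i, by omega, by omega, h2⟩)

lemma muC_mem_chain {n : ℕ} (c : ℕ → Bool) : muC c n ∈ vaSem (chainVA Sig n) [] := by
  refine ⟨lsC Sig c 0 n, ⟨3*n, ?_, by rw [chain_F]; exact Finset.mem_singleton_self _⟩,
    readWord_lsC, chainRun_valid (chainRun_lsC (n := n) c n 0 (by omega)), runMapping_lsC.symm⟩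
  have h0 : (chainVA Sig n).q0 = 3*0 := rfl
  rw [h0]
  exact chainRun_path (chainRun_lsC (n := n) c n 0 (by omega))

lemma mapDom_muC {c : ℕ → Bool} {n x : ℕ} :
    x ∈ mapDom (muC c n) ↔ ∃ i, i < n ∧ x = varC c i := by
  simp only [mapDom, muC, Set.mem_setOf_eq]
  by_cases hcond : ∃ i, i < n ∧ x = varC c i
  · simp [hcond]
  · simp [hcond]

lemma muC_dom_inj {c c' : ℕ → Bool} {n : ℕ}
    (h : mapDom (muC c n) = mapDom (muC c' n)) : ∀ i < n, c i = c' i := by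
  intro i hi
  have h1 : varC c i ∈ mapDom (muC c' n) := by
    rw [← h]; exact mapDom_muC.2 ⟨i, hi, rfl⟩
  obtain ⟨i', hi', he⟩ := mapDom_muC.1 h1
  unfold varC at he
  cases hci : c i <;> cases hci' : c' i' <;> rw [hci, hci'] at he <;> simp at he
  · have : i = i' := by omega
    subst this; rw [hci']
  · omega
  · omega
  · have : i = i' := by omega
    subst this; rw [hci']

end Aux4

section Aux5
variable {Sig : Type} [Fintype Sig] [DecidableEq Sig]

lemma mem_foldr_F {parts : List (VA Sig)} {q : ℕ} :
    q ∈ parts.foldr (fun B s => B.F ∪ s) (∅ : Finset ℕ) ↔ ∃ B ∈ parts, q ∈ B.F := by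
  induction parts with
  | nil => simp
  | cons B parts ih => simp [ih]

lemma mem_foldr_δ {parts : List (VA Sig)} {t : ℕ × VLabel Sig × ℕ} :
    t ∈ parts.foldr (fun B s => B.δ ∪ s) (∅ : Finset (ℕ × VLabel Sig × ℕ)) ↔
      ∃ B ∈ parts, t ∈ B.δ := by
  induction parts with
  | nil => simp
  | cons B parts ih => simp [ih]

lemma src_mem_states {B : VA Sig} {p q : ℕ} {l : VLabel Sig} (h : (p, l, q) ∈ B.δ) :
    p ∈ statesOf B :=
  Finset.mem_insert.2 (Or.inr (Finset.mem_union.2 (Or.inl (Finset.mem_union.2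
    (Or.inr (Finset.mem_image.2 ⟨(p,l,q), h, rfl⟩))))))

lemma tgt_mem_states {B : VA Sig} {p q : ℕ} {l : VLabel Sig} (h : (p, l, q) ∈ B.δ) :
    q ∈ statesOf B :=
  Finset.mem_insert.2 (Or.inr (Finset.mem_union.2
    (Or.inr (Finset.mem_image.2 ⟨(p,l,q), h, rfl⟩))))

lemma q0_mem_states {B : VA Sig} : B.q0 ∈ statesOf B := Finset.mem_insert_self _ _

lemma F_mem_states {B : VA Sig} {q : ℕ} (h : q ∈ B.F) : q ∈ statesOf B :=
  Finset.mem_insert.2 (Or.inr (Finset.mem_union.2 (Or.inl (Finset.mem_union.2 (Or.inl h)))))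

lemma parts_disjoint {A' : VA Sig} {parts : List (VA Sig)}
    (hA : DisjFunctionalVAWith A' parts) {B C : VA Sig} (hB : B ∈ parts) (hC : C ∈ parts)
    (hne : B ≠ C) : Disjoint (statesOf B) (statesOf C) :=
  by
    haveI : Std.Symm (fun B C : VA Sig => Disjoint (statesOf B) (statesOf C)) := ⟨fun _ _ h => h.symm⟩
    exact hA.2.1.forall hB hC hne

lemma parts_eq_of_common {A' : VA Sig} {parts : List (VA Sig)}
    (hA : DisjFunctionalVAWith A' parts) {B C : VA Sig} (hB : B ∈ parts) (hC : C ∈ parts)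
    {q : ℕ} (hqB : q ∈ statesOf B) (hqC : q ∈ statesOf C) : B = C := by
  by_contra hne
  exact absurd hqC (Finset.disjoint_left.1 (parts_disjoint hA hB hC hne) hqB)

lemma stay_in_component {A' : VA Sig} {parts : List (VA Sig)}
    (hA : DisjFunctionalVAWith A' parts) {B : VA Sig} (hB : B ∈ parts) :
    ∀ {ls : List (VLabel Sig)} {p r : ℕ}, VA.PathFrom A' p ls r → p ∈ statesOf B →
      VA.PathFrom B p ls r ∧ r ∈ statesOf B := by
  intro ls p r hpath
  induction hpath with
  | nil q => exact fun hq => ⟨.nil _, hq⟩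
  | @cons p q r l ls hδ htail ih =>
      intro hp
      rw [hA.2.2.2.2] at hδ
      rcases Finset.mem_union.1 hδ with h | h
      · rw [List.mem_toFinset, List.mem_map] at h
        obtain ⟨C, hC, he⟩ := h
        have : p = A'.q0 := ((Prod.ext_iff.1 he).1).symm
        exact absurd (this ▸ hp) (hA.2.2.1 B hB)
      · obtain ⟨C, hC, hCδ⟩ := mem_foldr_δ.1 h
        have hBC : C = B := parts_eq_of_common hA hC hB (src_mem_states hCδ) hp
        subst hBC
        obtain ⟨htail', hr⟩ := ih (tgt_mem_states hCδ)
        exact ⟨.cons hCδ htail', hr⟩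

lemma labels_mem {B : VA Sig} {p r : ℕ} {ls : List (VLabel Sig)}
    (h : VA.PathFrom B p ls r) : ∀ l ∈ ls, ∃ p' q', (p', l, q') ∈ B.δ := by
  induction h with
  | nil => simp
  | cons hδ htail ih =>
      intro l hl
      rcases List.mem_cons.1 hl with rfl | hl
      · exact ⟨_, _, hδ⟩
      · exact ih l hl

lemma component_dom {A' : VA Sig} {parts : List (VA Sig)}
    (hA : DisjFunctionalVAWith A' parts) {μ : VMapping} {d : List Sig}
    (hμ : μ ∈ vaSem A' d) : ∃ B ∈ parts, mapDom μ = ↑(varsOf B) := by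
  obtain ⟨ls, ⟨qf, hpath, hqf⟩, hread, hvalid, hμeq⟩ := hμ
  match ls, hpath with
  | [], hpath =>
      have h0 : A'.q0 = qf := path_nil_inv hpath
      rw [hA.2.2.2.1] at hqf
      obtain ⟨C, hC, hqfC⟩ := mem_foldr_F.1 hqf
      exact absurd (h0 ▸ F_mem_states hqfC) (hA.2.2.1 C hC)
  | l :: tl, hpath =>
      obtain ⟨q, hδ, htail⟩ := path_cons_inv hpath
      rw [hA.2.2.2.2] at hδ
      have hfirst : ∃ C ∈ parts, l = VLabel.eps ∧ q = C.q0 := by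
        rcases Finset.mem_union.1 hδ with h | h
        · rw [List.mem_toFinset, List.mem_map] at h
          obtain ⟨C, hC, he⟩ := h
          have h23 := Prod.ext_iff.1 (Prod.ext_iff.1 he).2
          exact ⟨C, hC, h23.1.symm, h23.2.symm⟩
        · obtain ⟨C, hC, hCδ⟩ := mem_foldr_δ.1 h
          exact absurd (src_mem_states hCδ) (hA.2.2.1 C hC)
      obtain ⟨C, hC, rfl, rfl⟩ := hfirst
      obtain ⟨htail', hqfC⟩ := stay_in_component hA hC htail q0_mem_states
      have hqfF : qf ∈ C.F := by
        rw [hA.2.2.2.1] at hqf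
        obtain ⟨D, hD, hqfD⟩ := mem_foldr_F.1 hqf
        have : D = C := parts_eq_of_common hA hD hC (F_mem_states hqfD) hqfC
        exact this ▸ hqfD
      have hacc : AcceptsWith C tl := ⟨qf, htail', hqfF⟩
      refine ⟨C, hC, ?_⟩
      ext x
      have hmem : x ∈ mapDom μ ↔ (VLabel.openv x : VLabel Sig) ∈ tl := by
        rw [hμeq]
        simp only [mapDom, runMapping, Set.mem_setOf_eq]
        by_cases h : (VLabel.openv x : VLabel Sig) ∈ VLabel.eps :: tl
        · rcases List.mem_cons.1 h with h' | h'
          · exact absurd h' (by simp)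
          · simp [h, h']
        · have h' : (VLabel.openv x : VLabel Sig) ∉ tl := fun hh => h (List.mem_cons_of_mem _ hh)
          simp [h, h']
      rw [hmem]
      simp only [Finset.coe_mem, Finset.mem_coe]
      constructor
      · intro hopen
        obtain ⟨p', q', htr⟩ := labels_mem htail' _ hopen
        exact Finset.mem_biUnion.2 ⟨(p', VLabel.openv x, q'), htr, by simp [labelVars]⟩
      · intro hx
        exact ((hA.1 C hC).2 tl hacc x hx).1

end Aux5

theorem statement10 (n : ℕ) (hn : 1 ≤ n) :
    (chainVA Sig n).Sequential ∧ (statesOf (chainVA Sig n)).card = 3 * n + 1 ∧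
    ∀ A' : VA Sig, DisjFunctionalVA A' →
      (∀ d : List Sig, vaSem A' d = vaSem (chainVA Sig n) d) →
      2 ^ n ≤ (statesOf A').card := by
  refine ⟨chain_sequential, ?_, ?_⟩
  · rw [statesOf_chain]; exact Finset.card_range _
  · rintro A' ⟨parts, hA⟩ hsem
    classical
    set cx : (Fin n → Bool) → ℕ → Bool := fun c i => if h : i < n then c ⟨i, h⟩ else false with hcx
    have hmu : ∀ c : ℕ → Bool, muC c n ∈ vaSem A' [] := fun c => by
      rw [hsem]; exact muC_mem_chain c
    have hcomp : ∀ c : Fin n → Bool,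
        ∃ B ∈ parts, mapDom (muC (cx c) n) = ↑(varsOf B) :=
      fun c => component_dom hA (hmu _)
    choose B hBmem hBdom using hcomp
    have hcard : (Finset.univ : Finset (Fin n → Bool)).card ≤ (statesOf A').card := by
      apply Finset.card_le_card_of_injOn (fun c => (B c).q0)
      · intro c _
        have htr : (A'.q0, VLabel.eps, (B c).q0) ∈ A'.δ := by
          rw [hA.2.2.2.2]
          exact Finset.mem_union.2 (Or.inl (List.mem_toFinset.2
            (List.mem_map.2 ⟨B c, hBmem c, rfl⟩)))
        exact tgt_mem_states htr
      · intro c _ c' _ hq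
        simp only at hq
        have hBeq : B c = B c' :=
          parts_eq_of_common hA (hBmem c) (hBmem c') q0_mem_states
            (by rw [hq]; exact q0_mem_states)
        have hdom : mapDom (muC (cx c) n) = mapDom (muC (cx c') n) := by
          rw [hBdom c, hBdom c', hBeq]
        funext i
        have hi := muC_dom_inj hdom i.1 i.2
        rw [hcx] at hi
        simp only [dif_pos i.2, Fin.eta] at hi
        exact hi
    have huniv : (Finset.univ : Finset (Fin n → Bool)).card = 2^n := by simp
    omega

end Spanners
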